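/- arXiv:1710.11124 — 3 statements merged into one kernel-verified Lean document; each statement's English description precedes it below -/
import Mathlib

section
/- Let $\alpha > 0$ and $s$ a positive integer. Define the polytope $\tau(\alpha,s) = \{x \in \mathbb{R}^d : \|x\|_\infty \leq \alpha, \|x\|_1 \leq s\alpha\}$ and, for $x \in \mathbb{R}^d$, the set $\mathcal{U}(\alpha,s,x) = \{u \in \mathbb{R}^d : \mathrm{supp}(u) \subseteq \mathrm{supp}(x), \|u\|_0 \leq s, \|u\|_1 = \|x\|_1, \|u\|_\infty \leq \alpha\}$. Then every $x \in \tau(\alpha,s)$ can be written as a finite convex combination $x = \sum_i \lambda_i u_i$ with $u_i \in \mathcal{U}(\alpha,s,x)$, $\lambda_i \in [0,1]$, $\sum_i \lambda_i = 1$, and moreover $\sum_i \lambda_i \|u_i\|_2^2 \leq s\alpha^2$. -/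
open Finset

private lemma abs_sub_sign (a m : ℝ) (ha : a ≠ 0) (hm : m ≤ |a|) :
    |a - m * Real.sign a| = |a| - m := by
  rcases lt_or_gt_of_ne ha with h | h
  · rw [Real.sign_of_neg h, abs_of_neg h] at *
    rw [abs_of_nonpos (by linarith)]; ring
  · rw [Real.sign_of_pos h, abs_of_pos h] at *
    rw [abs_of_nonneg (by linarith)]; ring

private lemma abs_add_sign (b m : ℝ) (hb : b ≠ 0) (hm0 : 0 ≤ m) :
    |b + m * Real.sign b| = |b| + m := by
  rcases lt_or_gt_of_ne hb with h | h
  · rw [Real.sign_of_neg h, abs_of_neg h] at *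
    rw [abs_of_nonpos (by linarith)]; ring
  · rw [Real.sign_of_pos h, abs_of_pos h] at *
    rw [abs_of_nonneg (by linarith)]; ring

private lemma move_props (d : ℕ) (α : ℝ) (x : Fin d → ℝ) (j₁ j₂ : Fin d)
    (hne : j₁ ≠ j₂) (ha : x j₁ ≠ 0) (hb : x j₂ ≠ 0) (haα : |x j₁| < α) (hbα : |x j₂| < α)
    (hinf : ∀ j, |x j| ≤ α) (m : ℝ) (hm : m = min |x j₁| (α - |x j₂|))
    (y : Fin d → ℝ)
    (hy : y = fun j => if j = j₁ then x j₁ - m * Real.sign (x j₁)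
      else if j = j₂ then x j₂ + m * Real.sign (x j₂) else x j) :
    (∀ j, y j ≠ 0 → x j ≠ 0) ∧ (∀ j, |y j| ≤ α) ∧ (∑ j, |y j| = ∑ j, |x j|) ∧
    (univ.filter fun j => y j ≠ 0 ∧ |y j| < α) ⊂ (univ.filter fun j => x j ≠ 0 ∧ |x j| < α) := by
  have hm0 : 0 ≤ m := by rw [hm]; exact le_min (abs_nonneg _) (by linarith)
  have hm1 : m ≤ |x j₁| := by rw [hm]; exact min_le_left _ _
  have hm2 : m ≤ α - |x j₂| := by rw [hm]; exact min_le_right _ _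
  have hy1 : y j₁ = x j₁ - m * Real.sign (x j₁) := by rw [hy]; simp
  have hy2 : y j₂ = x j₂ + m * Real.sign (x j₂) := by
    rw [hy]; simp [hne.symm]
  have hyo : ∀ j, j ≠ j₁ → j ≠ j₂ → y j = x j := by
    intro j h1 h2; rw [hy]; simp [h1, h2]
  have habs1 : |y j₁| = |x j₁| - m := by rw [hy1]; exact abs_sub_sign _ _ ha hm1
  have habs2 : |y j₂| = |x j₂| + m := by rw [hy2]; exact abs_add_sign _ _ hb hm0
  have hsupp : ∀ j, y j ≠ 0 → x j ≠ 0 := by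
    intro j hj
    by_cases h1 : j = j₁
    · rw [h1]; exact ha
    by_cases h2 : j = j₂
    · rw [h2]; exact hb
    · rw [← hyo j h1 h2]; exact hj
  have hbd : ∀ j, |y j| ≤ α := by
    intro j
    by_cases h1 : j = j₁
    · rw [h1, habs1]; linarith [hinf j₁]
    by_cases h2 : j = j₂
    · rw [h2, habs2]; linarith
    · rw [hyo j h1 h2]; exact hinf j
  have hj₂mem : j₂ ∈ univ.erase j₁ := Finset.mem_erase.mpr ⟨hne.symm, mem_univ _⟩
  have hsum : ∑ j, |y j| = ∑ j, |x j| := by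
    rw [← Finset.add_sum_erase univ (fun j => |y j|) (mem_univ j₁),
        ← Finset.add_sum_erase _ (fun j => |y j|) hj₂mem,
        ← Finset.add_sum_erase univ (fun j => |x j|) (mem_univ j₁),
        ← Finset.add_sum_erase _ (fun j => |x j|) hj₂mem]
    have : ∑ j ∈ (univ.erase j₁).erase j₂, |y j| = ∑ j ∈ (univ.erase j₁).erase j₂, |x j| := by
      apply Finset.sum_congr rfl
      intro j hj
      rw [Finset.mem_erase, Finset.mem_erase] at hj
      rw [hyo j hj.2.1 hj.1]
    rw [this, habs1, habs2]; ring
  refine ⟨hsupp, hbd, hsum, ?_⟩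
  have hsub : (univ.filter fun j => y j ≠ 0 ∧ |y j| < α) ⊆
      (univ.filter fun j => x j ≠ 0 ∧ |x j| < α) := by
    intro j hj
    simp only [mem_filter, mem_univ, true_and] at hj ⊢
    by_cases h1 : j = j₁
    · rw [h1]; exact ⟨ha, haα⟩
    by_cases h2 : j = j₂
    · rw [h2]; exact ⟨hb, hbα⟩
    · rw [hyo j h1 h2] at hj; exact hj
  rw [Finset.ssubset_iff_of_subset hsub]
  rcases le_total |x j₁| (α - |x j₂|) with hc | hc
  · refine ⟨j₁, ?_, ?_⟩
    · simp only [mem_filter, mem_univ, true_and]; exact ⟨ha, haα⟩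
    · simp only [mem_filter, mem_univ, true_and]
      intro hcon
      apply hcon.1
      have : |y j₁| = 0 := by rw [habs1, hm, min_eq_left hc]; ring
      exact abs_eq_zero.mp this
  · refine ⟨j₂, ?_, ?_⟩
    · simp only [mem_filter, mem_univ, true_and]; exact ⟨hb, hbα⟩
    · simp only [mem_filter, mem_univ, true_and]
      intro hcon
      have : |y j₂| = α := by rw [habs2, hm, min_eq_right hc]; ring
      linarith [hcon.2, this.ge]

private lemma two_le_free (d s : ℕ) (α : ℝ) (hα : 0 < α) (x : Fin d → ℝ)
    (hinf : ∀ j, |x j| ≤ α) (hone : ∑ j, |x j| ≤ s * α)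
    (hS : s < (univ.filter fun j => x j ≠ 0).card) :
    2 ≤ (univ.filter fun j => x j ≠ 0 ∧ |x j| < α).card := by
  by_contra h
  push_neg at h
  set S := univ.filter fun j => x j ≠ 0 with hSdef
  set F := univ.filter fun j => x j ≠ 0 ∧ |x j| < α with hFdef
  have hFS : F ⊆ S := by
    intro j hj
    simp only [hFdef, mem_filter] at hj
    simp only [hSdef, mem_filter]
    exact ⟨hj.1, hj.2.1⟩
  have hcard : (S \ F).card + F.card = S.card := Finset.card_sdiff_add_card_eq_card hFS
  have hPα : ∀ j ∈ S \ F, |x j| = α := by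
    intro j hj
    rw [Finset.mem_sdiff] at hj
    obtain ⟨hjS, hjF⟩ := hj
    simp only [hSdef, mem_filter, mem_univ, true_and] at hjS
    simp only [hFdef, mem_filter, mem_univ, true_and] at hjF
    have := hinf j
    by_contra hne
    exact hjF ⟨hjS, lt_of_le_of_ne this hne⟩
  have h1 : ∑ j ∈ S, |x j| ≤ ∑ j, |x j| :=
    Finset.sum_le_sum_of_subset_of_nonneg (Finset.subset_univ S)
      (fun j _ _ => abs_nonneg _)
  have h2 : ∑ j ∈ S \ F, |x j| + ∑ j ∈ F, |x j| = ∑ j ∈ S, |x j| :=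
    Finset.sum_sdiff hFS
  have h3 : ∑ j ∈ S \ F, |x j| = (S \ F).card * α := by
    rw [Finset.sum_congr rfl hPα, Finset.sum_const, nsmul_eq_mul]
  interval_cases hF : F.card
  · -- F empty
    have hP : s + 1 ≤ (S \ F).card := by omega
    have : ((s:ℝ) + 1) * α ≤ ((S \ F).card : ℝ) * α := by
      apply mul_le_mul_of_nonneg_right _ hα.le
      exact_mod_cast hP
    have hFnonneg : (0:ℝ) ≤ ∑ j ∈ F, |x j| := Finset.sum_nonneg fun j _ => abs_nonneg _
    nlinarith
  · -- F has one element
    obtain ⟨j₀, hj₀⟩ := Finset.card_eq_one.mp hF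
    have hj₀F : j₀ ∈ F := by rw [hj₀]; exact Finset.mem_singleton_self j₀
    simp only [hFdef, mem_filter, mem_univ, true_and] at hj₀F
    have hpos : 0 < |x j₀| := abs_pos.mpr hj₀F.1
    have hFsum : ∑ j ∈ F, |x j| = |x j₀| := by rw [hj₀, Finset.sum_singleton]
    have hP : s ≤ (S \ F).card := by omega
    have : (s:ℝ) * α ≤ ((S \ F).card : ℝ) * α := by
      apply mul_le_mul_of_nonneg_right _ hα.le
      exact_mod_cast hP
    nlinarith

private lemma single_case (d s : ℕ) (α : ℝ) (x : Fin d → ℝ)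
    (hinf : ∀ j, |x j| ≤ α)
    (hS : (univ.filter fun j => x j ≠ 0).card ≤ s) :
    ∃ (K : ℕ) (lam : Fin K → ℝ) (u : Fin K → Fin d → ℝ),
      (∀ i, 0 ≤ lam i) ∧ (∑ i, lam i = 1) ∧
      (∀ i, (∀ j, u i j ≠ 0 → x j ≠ 0) ∧
            ((univ.filter fun j => u i j ≠ 0).card ≤ s) ∧
            (∑ j, |u i j| = ∑ j, |x j|) ∧ (∀ j, |u i j| ≤ α)) ∧
      (∀ j, x j = ∑ i, lam i * u i j) := by
  refine ⟨1, fun _ => 1, fun _ => x, fun _ => zero_le_one, by simp, ?_, ?_⟩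
  · intro i
    exact ⟨fun j h => h, hS, rfl, hinf⟩
  · intro j; simp

private lemma aux_main (d s : ℕ) (α : ℝ) (hα : 0 < α) :
    ∀ n : ℕ, ∀ x : Fin d → ℝ,
      (univ.filter fun j => x j ≠ 0 ∧ |x j| < α).card ≤ n →
      (∀ j, |x j| ≤ α) → (∑ j, |x j| ≤ s * α) →
      ∃ (K : ℕ) (lam : Fin K → ℝ) (u : Fin K → Fin d → ℝ),
        (∀ i, 0 ≤ lam i) ∧ (∑ i, lam i = 1) ∧
        (∀ i, (∀ j, u i j ≠ 0 → x j ≠ 0) ∧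
              ((univ.filter fun j => u i j ≠ 0).card ≤ s) ∧
              (∑ j, |u i j| = ∑ j, |x j|) ∧ (∀ j, |u i j| ≤ α)) ∧
        (∀ j, x j = ∑ i, lam i * u i j) := by
  intro n
  induction n with
  | zero =>
    intro x hcard hinf hone
    by_cases hS : (univ.filter fun j => x j ≠ 0).card ≤ s
    · exact single_case d s α x hinf hS
    · have := two_le_free d s α hα x hinf hone (lt_of_not_ge hS)
      omega
  | succ n ih =>
    intro x hcard hinf hone
    by_cases hS : (univ.filter fun j => x j ≠ 0).card ≤ s
    · exact single_case d s α x hinf hS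
    have h2 := two_le_free d s α hα x hinf hone (lt_of_not_ge hS)
    obtain ⟨j₁, hj₁, j₂, hj₂, hne⟩ := Finset.one_lt_card.mp
      (show 1 < (univ.filter fun j => x j ≠ 0 ∧ |x j| < α).card by omega)
    simp only [mem_filter, mem_univ, true_and] at hj₁ hj₂
    obtain ⟨ha, haα⟩ := hj₁
    obtain ⟨hb, hbα⟩ := hj₂
    set m₁ := min |x j₁| (α - |x j₂|) with hm₁def
    set m₂ := min |x j₂| (α - |x j₁|) with hm₂def
    have hm₁pos : 0 < m₁ := lt_min (abs_pos.mpr ha) (by linarith)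
    have hm₂pos : 0 < m₂ := lt_min (abs_pos.mpr hb) (by linarith)
    set y : Fin d → ℝ := fun j => if j = j₁ then x j₁ - m₁ * Real.sign (x j₁)
      else if j = j₂ then x j₂ + m₁ * Real.sign (x j₂) else x j with hydef
    set z : Fin d → ℝ := fun j => if j = j₂ then x j₂ - m₂ * Real.sign (x j₂)
      else if j = j₁ then x j₁ + m₂ * Real.sign (x j₁) else x j with hzdef
    obtain ⟨hysupp, hybd, hysum, hyss⟩ :=
      move_props d α x j₁ j₂ hne ha hb haα hbα hinf m₁ hm₁def y hydef
    obtain ⟨hzsupp, hzbd, hzsum, hzss⟩ :=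
      move_props d α x j₂ j₁ hne.symm hb ha hbα haα hinf m₂ hm₂def z hzdef
    have hycard : (univ.filter fun j => y j ≠ 0 ∧ |y j| < α).card ≤ n := by
      have := Finset.card_lt_card hyss; omega
    have hzcard : (univ.filter fun j => z j ≠ 0 ∧ |z j| < α).card ≤ n := by
      have := Finset.card_lt_card hzss; omega
    obtain ⟨K₁, lam₁, u₁, hl₁, hls₁, hu₁, hd₁⟩ := ih y hycard hybd (hysum ▸ hone)
    obtain ⟨K₂, lam₂, u₂, hl₂, hls₂, hu₂, hd₂⟩ := ih z hzcard hzbd (hzsum ▸ hone)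
    set t : ℝ := m₂ / (m₁ + m₂) with htdef
    have hsum_pos : 0 < m₁ + m₂ := by linarith
    have ht0 : 0 ≤ t := div_nonneg hm₂pos.le hsum_pos.le
    have ht1 : t ≤ 1 := by rw [div_le_one hsum_pos]; linarith
    have htm : t * m₁ = (1 - t) * m₂ := by rw [htdef]; field_simp; ring
    -- convexity identity
    have hconv : ∀ j, x j = t * y j + (1 - t) * z j := by
      intro j
      by_cases h1 : j = j₁
      · subst h1
        have hy : y j = x j - m₁ * Real.sign (x j) := by rw [hydef]; simp
        have hz : z j = x j + m₂ * Real.sign (x j) := by rw [hzdef]; simp [hne]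
        rw [hy, hz]; linear_combination Real.sign (x j) * htm
      · by_cases h2 : j = j₂
        · subst h2
          have hy : y j = x j + m₁ * Real.sign (x j) := by rw [hydef]; simp [h1]
          have hz : z j = x j - m₂ * Real.sign (x j) := by rw [hzdef]; simp
          rw [hy, hz]; linear_combination (-Real.sign (x j)) * htm
        · have hy : y j = x j := by rw [hydef]; simp [h1, h2]
          have hz : z j = x j := by rw [hzdef]; simp [h1, h2]
          rw [hy, hz]; ring
    refine ⟨K₁ + K₂, Fin.append (fun i => t * lam₁ i) (fun i => (1 - t) * lam₂ i),
      Fin.append u₁ u₂, ?_, ?_, ?_, ?_⟩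
    · intro i
      cases i using Fin.addCases with
      | left i => rw [Fin.append_left]; exact mul_nonneg ht0 (hl₁ i)
      | right i => rw [Fin.append_right]; exact mul_nonneg (by linarith) (hl₂ i)
    · rw [Fin.sum_univ_add]
      simp only [Fin.append_left, Fin.append_right, ← Finset.mul_sum, hls₁, hls₂]
      ring
    · intro i
      cases i using Fin.addCases with
      | left i =>
        simp only [Fin.append_left]
        obtain ⟨hu1, hu2, hu3, hu4⟩ := hu₁ i
        exact ⟨fun j h => hysupp j (hu1 j h), hu2, hu3.trans hysum, hu4⟩
      | right i =>
        simp only [Fin.append_right]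
        obtain ⟨hu1, hu2, hu3, hu4⟩ := hu₂ i
        exact ⟨fun j h => hzsupp j (hu1 j h), hu2, hu3.trans hzsum, hu4⟩
    · intro j
      rw [Fin.sum_univ_add]
      simp only [Fin.append_left, Fin.append_right, mul_assoc, ← Finset.mul_sum]
      rw [← hd₁ j, ← hd₂ j]
      exact hconv j

/-- Cai–Zhang sparse representation of points in a polytope (Lemma 2.2). -/
theorem sparse_representation_of_polytope (d s : ℕ) (hs : 0 < s) (α : ℝ) (hα : 0 < α)
    (x : Fin d → ℝ)
    (hx_inf : ∀ j, |x j| ≤ α)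
    (hx_one : ∑ j, |x j| ≤ s * α) :
    ∃ (K : ℕ) (lam : Fin K → ℝ) (u : Fin K → Fin d → ℝ),
      (∀ i, 0 ≤ lam i ∧ lam i ≤ 1) ∧
      (∑ i, lam i = 1) ∧
      (∀ i, (∀ j, u i j ≠ 0 → x j ≠ 0) ∧
            ((univ.filter fun j => u i j ≠ 0).card ≤ s) ∧
            (∑ j, |u i j| = ∑ j, |x j|) ∧
            (∀ j, |u i j| ≤ α)) ∧
      (x = ∑ i, lam i • u i) ∧
      (∑ i, lam i * ∑ j, (u i j) ^ 2 ≤ s * α ^ 2) := by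
  obtain ⟨K, lam, u, hl0, hls, hu, hdec⟩ :=
    aux_main d s α hα ((univ.filter fun j => x j ≠ 0 ∧ |x j| < α).card) x le_rfl hx_inf hx_one
  refine ⟨K, lam, u, ?_, hls, hu, ?_, ?_⟩
  · intro i
    refine ⟨hl0 i, ?_⟩
    calc lam i ≤ ∑ i', lam i' := Finset.single_le_sum (fun i' _ => hl0 i') (mem_univ i)
    _ = 1 := hls
  · funext j
    rw [Finset.sum_apply]
    simp only [Pi.smul_apply, smul_eq_mul]
    exact hdec j
  · have hbound : ∀ i, ∑ j, (u i j) ^ 2 ≤ s * α ^ 2 := by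
      intro i
      obtain ⟨_, _, hu3, hu4⟩ := hu i
      have h1 : ∑ j, (u i j) ^ 2 ≤ ∑ j, α * |u i j| := by
        apply Finset.sum_le_sum
        intro j _
        nlinarith [abs_nonneg (u i j), sq_abs (u i j), hu4 j]
      have h2 : ∑ j, α * |u i j| = α * ∑ j, |x j| := by
        rw [← Finset.mul_sum, hu3]
      nlinarith [hx_one]
    calc ∑ i, lam i * ∑ j, (u i j) ^ 2 ≤ ∑ i, lam i * (s * α ^ 2) :=
        Finset.sum_le_sum fun i _ => mul_le_mul_of_nonneg_left (hbound i) (hl0 i)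
    _ = s * α ^ 2 := by rw [← Finset.sum_mul, hls, one_mul]
end

section
/- Let $h \in \mathbb{R}^d$ and let $T_0 \subseteq \{1,\dots,d\}$ with $|T_0| = s$ be the set of indices of the $s$ largest-magnitude entries of $h$. Suppose $\|h_{T_0^c}\|_1 \leq \|h_{T_0}\|_1 + 2c$ for some $c \geq 0$. Then $\|h_{T_0^c}\|_2 \leq \sqrt{\|h_{T_0}\|_2^2 + \frac{2 c \|h_{T_0}\|_2}{\sqrt{s}}}$. -/
open Finset

/-- Inequality (31): bound for the tail `‖h_{T₀ᶜ}‖₂`. -/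
theorem tail_l2_bound {d : ℕ} (h : Fin d → ℝ) (s : ℕ) (hs : 0 < s)
    (T0 : Finset (Fin d)) (hT0card : T0.card = s)
    (hT0max : ∀ i ∈ T0, ∀ j ∈ T0ᶜ, |h j| ≤ |h i|)
    (c : ℝ) (hc : 0 ≤ c)
    (hcone : ∑ j ∈ T0ᶜ, |h j| ≤ ∑ j ∈ T0, |h j| + 2 * c) :
    Real.sqrt (∑ j ∈ T0ᶜ, h j ^ 2) ≤
      Real.sqrt ((∑ j ∈ T0, h j ^ 2) +
        2 * c * Real.sqrt (∑ j ∈ T0, h j ^ 2) / Real.sqrt s) := by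
  set A := ∑ j ∈ T0, |h j| with hA
  set Q := ∑ j ∈ T0, h j ^ 2 with hQ
  have hQ0 : 0 ≤ Q := Finset.sum_nonneg fun i _ => sq_nonneg _
  have hA0 : 0 ≤ A := Finset.sum_nonneg fun i _ => abs_nonneg _
  have hs0 : (0 : ℝ) < s := by exact_mod_cast hs
  have hsqrt_s : (0:ℝ) < Real.sqrt s := Real.sqrt_pos.mpr hs0
  -- Cauchy–Schwarz: A² ≤ s * Q
  have hCS : A ^ 2 ≤ s * Q := by
    have := sq_sum_le_card_mul_sum_sq (s := T0) (f := fun j => |h j|)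
    simpa [hT0card, sq_abs] using this
  have hAle : A ≤ Real.sqrt s * Real.sqrt Q := by
    have h1 : A ≤ Real.sqrt (s * Q) := by
      have := Real.sqrt_le_sqrt hCS
      rwa [Real.sqrt_sq hA0] at this
    rwa [Real.sqrt_mul (le_of_lt hs0)] at h1
  -- each tail entry ≤ A / s
  have hinf : ∀ j ∈ T0ᶜ, |h j| ≤ A / s := by
    intro j hj
    have hsum : (s : ℝ) * |h j| ≤ A := by
      calc (s : ℝ) * |h j| = ∑ _i ∈ T0, |h j| := by
            rw [Finset.sum_const, hT0card, nsmul_eq_mul]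
        _ ≤ A := Finset.sum_le_sum fun i hi => hT0max i hi j hj
    rw [le_div_iff₀ hs0]
    linarith [hsum]
  -- bound the tail sum of squares
  have hB0 : 0 ≤ ∑ j ∈ T0ᶜ, |h j| := Finset.sum_nonneg fun i _ => abs_nonneg _
  have htail : ∑ j ∈ T0ᶜ, h j ^ 2 ≤ (A / s) * (A + 2 * c) := by
    calc ∑ j ∈ T0ᶜ, h j ^ 2 = ∑ j ∈ T0ᶜ, |h j| * |h j| := by
          refine Finset.sum_congr rfl fun j _ => ?_
          rw [abs_mul_abs_self, sq]
      _ ≤ ∑ j ∈ T0ᶜ, (A / s) * |h j| :=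
          Finset.sum_le_sum fun j hj =>
            mul_le_mul_of_nonneg_right (hinf j hj) (abs_nonneg _)
      _ = (A / s) * ∑ j ∈ T0ᶜ, |h j| := by rw [Finset.mul_sum]
      _ ≤ (A / s) * (A + 2 * c) := by
          apply mul_le_mul_of_nonneg_left hcone
          positivity
  apply Real.sqrt_le_sqrt
  calc ∑ j ∈ T0ᶜ, h j ^ 2 ≤ (A / s) * (A + 2 * c) := htail
    _ = A ^ 2 / s + 2 * c * A / s := by ring
    _ ≤ Q + 2 * c * Real.sqrt Q / Real.sqrt s := by
        gcongr ?_ + ?_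
        · rw [div_le_iff₀ hs0]; linarith [hCS]
        · rw [div_le_div_iff₀ hs0 hsqrt_s]
          calc 2 * c * A * Real.sqrt s ≤ 2 * c * (Real.sqrt s * Real.sqrt Q) * Real.sqrt s := by
                gcongr
            _ = 2 * c * Real.sqrt Q * (Real.sqrt s * Real.sqrt s) := by ring
            _ = 2 * c * Real.sqrt Q * s := by
                rw [Real.mul_self_sqrt (le_of_lt hs0)]
end

section
/- Let $h \in \mathbb{R}^d$, let $T_0$ be the index set of the $s$ largest-magnitude entries of $D^*h$ for a tight frame $D$, and suppose $\|D^*_{T_0^c} h\|_1 \leq sr$ and $\|D^*_{T_0^c}h\|_\infty \leq \frac{s}{n} r$ for some $r \geq 0$ and positive integer $n \leq s$. Then there exist finitely many $n$-sparse vectors $u_i \in \mathbb{R}^d$ with supports contained in $T_0^c$ and weights $\lambda_i \in (0,1]$, $\sum_i \lambda_i = 1$, such that $D^*_{T_0^c} h = \sum_i \lambda_i u_i$, $\|u_i\|_\infty \leq \frac{s}{n}r$ for each $i$, and $\sum_i \lambda_i \|u_i\|_2^2 \leq \frac{s^2 r^2}{n}$. -/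
open Matrix Finset

/-- Sum of clamped shifts: for `0 ≤ x ≤ n`, `∑_{m<n} clamp(x-m) = x`. -/
lemma clampSum (n : ℕ) : ∀ x : ℝ, 0 ≤ x → x ≤ n → ∑ m ∈ Finset.range n, min (max (x - m) 0) 1 = x := by
  induction n with
  | zero =>
    intro x h0 h1
    simp only [Nat.cast_zero] at h1
    simp only [Finset.range_zero, Finset.sum_empty]
    linarith
  | succ n ih =>
    intro x h0 h1
    rw [Finset.sum_range_succ]
    push_cast at h1
    by_cases hx : x ≤ n
    · rw [ih x h0 hx, max_eq_right (by linarith : x - (n:ℝ) ≤ 0)]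
      simp
    · push_neg at hx
      have h2 : ∑ m ∈ Finset.range n, min (max (x - m) 0) 1 = n := by
        rw [Finset.sum_congr rfl (g := fun _ => (1:ℝ)) (fun m hm => ?_)]
        · simp
        · have hm' : m < n := Finset.mem_range.1 hm
          have hmr : (m:ℝ) + 1 ≤ n := by exact_mod_cast hm'
          rw [max_eq_left (by linarith : (0:ℝ) ≤ x - m), min_eq_right (by linarith : (1:ℝ) ≤ x - m)]
      rw [h2, max_eq_left (by linarith : (0:ℝ) ≤ x - n), min_eq_left (by linarith : x - (n:ℝ) ≤ 1)]
      ring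

/-- Sparse convex decomposition of a vector in `[0,1]^d` with total mass ≤ n. -/
lemma exists_decomp (d n : ℕ) (hn : 1 ≤ n) (w : ℕ → ℝ)
    (hw0 : ∀ k, 0 ≤ w k) (hw1 : ∀ k, w k ≤ 1) (hwd : ∀ k, d ≤ k → w k = 0)
    (hsum : ∑ k ∈ Finset.range d, w k ≤ n) :
    ∃ (K : ℕ) (lam : Fin K → ℝ) (S : Fin K → Finset ℕ),
      (∀ i, 0 < lam i) ∧ (∑ i, lam i = 1) ∧
      (∀ i, (S i).card ≤ n) ∧
      (∀ i, S i ⊆ Finset.range d) ∧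
      (∀ j, j < d → ∑ i, lam i * (if j ∈ S i then (1:ℝ) else 0) = w j) := by
  classical
  set a : ℕ → ℝ := fun j => ∑ k ∈ Finset.range j, w k with ha
  have ham : Monotone a := by
    intro i j hij
    exact Finset.sum_le_sum_of_subset_of_nonneg (Finset.range_subset_range.2 hij)
      (fun k _ _ => hw0 k)
  have hstep : ∀ j, a (j + 1) = a j + w j := fun j => Finset.sum_range_succ w j
  have ha0 : a 0 = 0 := by simp [ha]
  have han : ∀ j, a j ≤ n := by
    intro j
    rcases le_total j d with hjd | hdj
    · exact le_trans (ham hjd) hsum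
    · have : a j = a d + ∑ k ∈ Finset.Ico d j, w k := by
        rw [ha]
        simp only [Finset.range_eq_Ico]
        rw [← Finset.sum_Ico_consecutive w (Nat.zero_le d) hdj]
      rw [this, Finset.sum_eq_zero (fun k hk => hwd k (Finset.mem_Ico.1 hk).1)]
      simpa using hsum
  have ha_nonneg : ∀ j, 0 ≤ a j := fun j => Finset.sum_nonneg fun k _ => hw0 k
  -- breakpoints
  set B : Finset ℝ :=
    insert 0 (insert 1 ((Finset.range (d+1)).image fun j => Int.fract (a j))) with hB
  have hB0 : (0:ℝ) ∈ B := by simp [hB]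
  have hB1 : (1:ℝ) ∈ B := by simp [hB]
  have hBnonneg : ∀ b ∈ B, 0 ≤ b := by
    intro b hb
    simp only [hB, Finset.mem_insert, Finset.mem_image] at hb
    rcases hb with rfl | rfl | ⟨j, _, rfl⟩
    · exact le_rfl
    · norm_num
    · exact Int.fract_nonneg _
  have hBle1 : ∀ b ∈ B, b ≤ 1 := by
    intro b hb
    simp only [hB, Finset.mem_insert, Finset.mem_image] at hb
    rcases hb with rfl | rfl | ⟨j, _, rfl⟩
    · norm_num
    · exact le_rfl
    · exact le_of_lt (Int.fract_lt_one _)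
  set L : List ℝ := B.sort (· ≤ ·) with hL
  have hLs : L.SortedLT := Finset.sortedLT_sort B
  have hmemL : ∀ b, b ∈ L ↔ b ∈ B := fun b => Finset.mem_sort _
  have hlen2 : 2 ≤ L.length := by
    have : 1 < B.card := Finset.one_lt_card.2 ⟨0, hB0, 1, hB1, by norm_num⟩
    rwa [hL, Finset.length_sort]
  set K : ℕ := L.length - 1 with hK
  have hKlen : K + 1 = L.length := by rw [hK]; omega
  set t : ℕ → ℝ := fun i => L.getD i 1 with ht
  have htget : ∀ i (h : i < L.length), t i = L.get ⟨i, h⟩ := fun i h => List.getD_eq_get L 1 ⟨i, h⟩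
  have htmem : ∀ i, i < L.length → t i ∈ B := by
    intro i h; rw [htget i h, ← hmemL]; exact List.get_mem _ _
  have htlt : ∀ i j, i < j → j < L.length → t i < t j := by
    intro i j hij hj
    rw [htget i (lt_trans hij hj), htget j hj]
    exact hLs (Fin.mk_lt_mk.2 hij)
  have htmono : ∀ i j, i ≤ j → j < L.length → t i ≤ t j := by
    intro i j hij hj
    rcases eq_or_lt_of_le hij with rfl | h
    · exact le_rfl
    · exact le_of_lt (htlt i j h hj)
  have hsurjB : ∀ b ∈ B, ∃ k, k < L.length ∧ t k = b := by
    intro b hb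
    rw [← hmemL, List.mem_iff_get] at hb
    obtain ⟨k, hk⟩ := hb
    exact ⟨k.1, k.2, by rw [htget k.1 k.2]; exact hk⟩
  have ht0 : t 0 = 0 := by
    obtain ⟨k, hk, hkv⟩ := hsurjB 0 hB0
    have h1 : 0 ≤ t 0 := hBnonneg _ (htmem 0 (by omega))
    have h2 : t 0 ≤ t k := htmono 0 k (Nat.zero_le k) hk
    rw [hkv] at h2
    linarith
  have htK : t K = 1 := by
    obtain ⟨k, hk, hkv⟩ := hsurjB 1 hB1
    have h1 : t K ≤ 1 := hBle1 _ (htmem K (by omega))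
    have h2 : t k ≤ t K := htmono k K (by omega) (by omega)
    rw [hkv] at h2
    linarith
  have hgap : ∀ i, i + 1 < L.length → ∀ b ∈ B, b ≤ t i ∨ t (i+1) ≤ b := by
    intro i hi b hb
    obtain ⟨k, hk, hkv⟩ := hsurjB b hb
    rcases le_or_gt k i with h | h
    · left; rw [← hkv]; exact htmono k i h (by omega)
    · right; rw [← hkv]; exact htmono (i+1) k h hk
  -- bounds on t in range
  have ht01 : ∀ i, i < L.length → 0 ≤ t i ∧ t i ≤ 1 :=
    fun i h => ⟨hBnonneg _ (htmem i h), hBle1 _ (htmem i h)⟩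
  set τ : ℕ → ℝ := fun i => (t i + t (i+1)) / 2 with hτ
  have hτlt : ∀ i, i < K → t i < τ i ∧ τ i < t (i+1) := by
    intro i hiK
    have := htlt i (i+1) (Nat.lt_succ_self i) (by omega)
    constructor <;> (simp only [hτ]; linarith)
  refine ⟨K, fun i => t (i.1 + 1) - t i.1,
    fun i => (Finset.range d).filter
      (fun j => ∃ m, m < n ∧ a j ≤ τ i.1 + m ∧ τ i.1 + m < a (j+1)), ?_, ?_, ?_, ?_, ?_⟩
  · intro i
    have hi2 : i.1 < K := i.2
    have := htlt i.1 (i.1 + 1) (Nat.lt_succ_self _) (by omega)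
    show 0 < t (i.1 + 1) - t i.1
    linarith
  · show ∑ i : Fin K, (t (i.1+1) - t i.1) = 1
    rw [Fin.sum_univ_eq_sum_range (fun i => t (i+1) - t i) K, Finset.sum_range_sub t K, ht0, htK]
    ring
  · -- cardinality bound
    intro i
    have : ((Finset.range d).filter
        (fun j => ∃ m, m < n ∧ a j ≤ τ i.1 + m ∧ τ i.1 + m < a (j+1))).card
        ≤ (Finset.range n).card := by
      apply Finset.card_le_card_of_injOn
        (fun j => if h : ∃ m, m < n ∧ a j ≤ τ i.1 + m ∧ τ i.1 + m < a (j+1) then Nat.find h else 0)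
      · intro j hj
        obtain ⟨-, hex⟩ := Finset.mem_filter.1 hj
        simp only [dif_pos hex]
        exact Finset.mem_range.2 (Nat.find_spec hex).1
      · intro j1 hj1 j2 hj2 heq
        obtain ⟨-, hex1⟩ := Finset.mem_filter.1 hj1
        obtain ⟨-, hex2⟩ := Finset.mem_filter.1 hj2
        simp only [dif_pos hex1, dif_pos hex2] at heq
        obtain ⟨-, h1a, h1b⟩ := Nat.find_spec hex1
        obtain ⟨-, h2a, h2b⟩ := Nat.find_spec hex2
        rw [heq] at h1a h1b
        by_contra hne
        rcases Nat.lt_or_ge j1 j2 with h | h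
        · have : a (j1 + 1) ≤ a j2 := ham h
          linarith
        · have hlt : j2 < j1 := lt_of_le_of_ne h (Ne.symm hne)
          have : a (j2 + 1) ≤ a j1 := ham hlt
          linarith
    simpa using this
  · intro i; exact Finset.filter_subset _ _
  · -- the key reconstruction identity
    intro j hjd
    -- key interval lemma
    have keylem : ∀ (α β : ℝ), α ≤ β → (0 < α → α < 1 → α ∈ B) → (0 < β → β < 1 → β ∈ B) →
        ∑ i ∈ Finset.range K, (t (i+1) - t i) * (if α ≤ τ i ∧ τ i < β then (1:ℝ) else 0)
          = min (max β 0) 1 - min (max α 0) 1 := by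
      intro α β hαβ hαB hβB
      set cα := min (max α 0) 1 with hcα
      set cβ := min (max β 0) 1 with hcβ
      have hcαβ : cα ≤ cβ := min_le_min (max_le_max hαβ le_rfl) le_rfl
      have hcα0 : 0 ≤ cα := le_min (le_max_right _ _) zero_le_one
      have hcβ0 : 0 ≤ cβ := le_min (le_max_right _ _) zero_le_one
      have hcα1 : cα ≤ 1 := min_le_right _ _
      have hcβ1 : cβ ≤ 1 := min_le_right _ _
      set g : ℝ → ℝ := fun x => min (max x cα) cβ with hg
      have key : ∀ i ∈ Finset.range K,
          (t (i+1) - t i) * (if α ≤ τ i ∧ τ i < β then (1:ℝ) else 0) = g (t (i+1)) - g (t i) := by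
        intro i hi
        have hiK : i < K := Finset.mem_range.1 hi
        have h0i : 0 ≤ t i := (ht01 i (by omega)).1
        have hi1 : t (i+1) ≤ 1 := (ht01 (i+1) (by omega)).2
        have htilt : t i < t (i+1) := htlt i (i+1) (Nat.lt_succ_self _) (by omega)
        obtain ⟨hτ1, hτ2⟩ := hτlt i hiK
        by_cases hind : α ≤ τ i ∧ τ i < β
        · obtain ⟨hα, hβ⟩ := hind
          have hαti : α ≤ t i := by
            by_contra h'
            push_neg at h'
            have hα1 : α < 1 := lt_of_le_of_lt hα (lt_of_lt_of_le hτ2 hi1)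
            have hα0 : 0 < α := lt_of_le_of_lt h0i h'
            rcases hgap i (by omega) α (hαB hα0 hα1) with h | h
            · linarith
            · linarith
          have hβti : t (i+1) ≤ β := by
            by_contra h'
            push_neg at h'
            have hβ0 : 0 < β := lt_of_le_of_lt h0i (lt_trans hτ1 hβ)
            have hβ1 : β < 1 := lt_of_lt_of_le h' hi1
            rcases hgap i (by omega) β (hβB hβ0 hβ1) with h | h
            · linarith
            · linarith
          have hgti : g (t i) = t i := by
            simp only [hg]
            have h1 : cα ≤ t i := le_trans (min_le_left _ _) (max_le hαti h0i)
            have h2 : t i ≤ cβ := le_trans (le_of_lt htilt)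
              (le_min (le_trans hβti (le_max_left _ _)) hi1)
            rw [max_eq_left h1, min_eq_left h2]
          have hgti1 : g (t (i+1)) = t (i+1) := by
            simp only [hg]
            have h1 : cα ≤ t (i+1) := le_trans (min_le_left _ _)
              (max_le (le_trans hαti (le_of_lt htilt)) (by linarith))
            have h2 : t (i+1) ≤ cβ := le_min (le_trans hβti (le_max_left _ _)) hi1
            rw [max_eq_left h1, min_eq_left h2]
          rw [if_pos ⟨hα, hβ⟩, hgti, hgti1]
          ring
        · rw [if_neg hind, mul_zero]
          push_neg at hind
          by_cases hc : α ≤ τ i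
          · have hβτ : β ≤ τ i := hind hc
            have hβti : β ≤ t i := by
              by_contra h'
              push_neg at h'
              have hβ0 : 0 < β := lt_of_le_of_lt h0i h'
              have hβ1 : β < 1 := lt_of_le_of_lt hβτ (lt_of_lt_of_le hτ2 hi1)
              rcases hgap i (by omega) β (hβB hβ0 hβ1) with h | h
              · linarith
              · linarith
            have hcβti : cβ ≤ t i := le_trans (min_le_left _ _) (max_le hβti h0i)
            have e1 : g (t i) = cβ := by
              simp only [hg]; rw [min_eq_right (le_trans hcβti (le_max_left _ _))]
            have e2 : g (t (i+1)) = cβ := by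
              simp only [hg]
              apply min_eq_right
              exact le_trans hcβti (le_trans (le_of_lt htilt) (le_max_left _ _))
            rw [e1, e2]; ring
          · push_neg at hc
            have hαti : t (i+1) ≤ α := by
              by_contra h'
              push_neg at h'
              have hα0 : 0 < α := lt_of_le_of_lt h0i (lt_trans hτ1 hc)
              have hα1 : α < 1 := lt_of_lt_of_le h' hi1
              rcases hgap i (by omega) α (hαB hα0 hα1) with h | h
              · linarith
              · linarith
            have hticα : t (i+1) ≤ cα := le_min (le_trans hαti (le_max_left _ _)) hi1
            have e1 : g (t i) = cα := by
              simp only [hg]; rw [max_eq_right (le_trans (le_of_lt htilt) hticα), min_eq_left hcαβ]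
            have e2 : g (t (i+1)) = cα := by
              simp only [hg]; rw [max_eq_right hticα, min_eq_left hcαβ]
            rw [e1, e2]; ring
      have tele : ∑ i ∈ Finset.range K, (g (t (i+1)) - g (t i)) = g (t K) - g (t 0) :=
        Finset.sum_range_sub (fun i => g (t i)) K
      rw [Finset.sum_congr rfl key, tele]
      have hgK : g (t K) = cβ := by
        rw [htK]; simp only [hg]; rw [max_eq_left hcα1, min_eq_right hcβ1]
      have hg0 : g (t 0) = cα := by
        rw [ht0]; simp only [hg]; rw [max_eq_right hcα0, min_eq_left hcαβ]
      rw [hgK, hg0]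
    -- alignment of endpoints
    have halign : ∀ (j' : ℕ), j' ≤ d → ∀ (m : ℕ),
        0 < a j' - m → a j' - m < 1 → a j' - (m:ℝ) ∈ B := by
      intro j' hj' m h1 h2
      have hfl : ⌊a j'⌋ = (m : ℤ) := by
        rw [Int.floor_eq_iff]
        constructor
        · push_cast; linarith
        · push_cast; linarith
      have : Int.fract (a j') = a j' - m := by
        rw [Int.fract, hfl]; push_cast; ring
      rw [← this, hB]
      apply Finset.mem_insert_of_mem
      apply Finset.mem_insert_of_mem
      exact Finset.mem_image.2 ⟨j', Finset.mem_range.2 (by omega), rfl⟩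
    -- uniqueness of m
    have huniq : ∀ (i : ℕ) (m m' : ℕ),
        (a j ≤ τ i + m ∧ τ i + m < a (j+1)) → (a j ≤ τ i + m' ∧ τ i + m' < a (j+1)) → m = m' := by
      intro i m m' ⟨h1, h2⟩ ⟨h3, h4⟩
      have hwj : a (j+1) ≤ a j + 1 := by rw [hstep]; linarith [hw1 j]
      have c1 : (m':ℝ) < m + 1 := by linarith
      have c2 : (m:ℝ) < m' + 1 := by linarith
      have d1 : m' < m + 1 := by exact_mod_cast c1
      have d2 : m < m' + 1 := by exact_mod_cast c2
      omega
    -- step 1: indicator as a sum over m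
    have hstep1 : ∀ i, i < K →
        (if j ∈ (Finset.range d).filter
            (fun j => ∃ m, m < n ∧ a j ≤ τ i + m ∧ τ i + m < a (j+1)) then (1:ℝ) else 0)
        = ∑ m ∈ Finset.range n, (if a j ≤ τ i + m ∧ τ i + m < a (j+1) then (1:ℝ) else 0) := by
      intro i hiK
      by_cases hj : j ∈ (Finset.range d).filter
          (fun j => ∃ m, m < n ∧ a j ≤ τ i + m ∧ τ i + m < a (j+1))
      · rw [if_pos hj]
        obtain ⟨-, m0, hm0n, hm0⟩ := Finset.mem_filter.1 hj
        have : ∀ m ∈ Finset.range n,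
            (if a j ≤ τ i + m ∧ τ i + m < a (j+1) then (1:ℝ) else 0)
            = if m = m0 then (1:ℝ) else 0 := by
          intro m hm
          congr 1
          apply propext
          constructor
          · intro hcond; exact huniq i m m0 hcond hm0
          · rintro rfl; exact hm0
        rw [Finset.sum_congr rfl this, Finset.sum_ite_eq' (Finset.range n) m0 (fun _ => (1:ℝ)),
          if_pos (Finset.mem_range.2 hm0n)]
      · rw [if_neg hj, Finset.sum_eq_zero]
        intro m hm
        rw [if_neg]
        intro hcond
        exact hj (Finset.mem_filter.2 ⟨Finset.mem_range.2 hjd, m, Finset.mem_range.1 hm, hcond⟩)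
    -- assemble
    rw [Fin.sum_univ_eq_sum_range (fun i => (t (i+1) - t i) *
      (if j ∈ (Finset.range d).filter
        (fun j => ∃ m, m < n ∧ a j ≤ τ i + m ∧ τ i + m < a (j+1)) then (1:ℝ) else 0)) K]
    calc ∑ i ∈ Finset.range K, (t (i+1) - t i) *
          (if j ∈ (Finset.range d).filter
            (fun j => ∃ m, m < n ∧ a j ≤ τ i + m ∧ τ i + m < a (j+1)) then (1:ℝ) else 0)
        = ∑ i ∈ Finset.range K, ∑ m ∈ Finset.range n,
            (t (i+1) - t i) * (if a j ≤ τ i + m ∧ τ i + m < a (j+1) then (1:ℝ) else 0) := by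
          apply Finset.sum_congr rfl
          intro i hi
          rw [hstep1 i (Finset.mem_range.1 hi), Finset.mul_sum]
      _ = ∑ m ∈ Finset.range n, ∑ i ∈ Finset.range K,
            (t (i+1) - t i) * (if a j ≤ τ i + m ∧ τ i + m < a (j+1) then (1:ℝ) else 0) :=
          Finset.sum_comm
      _ = ∑ m ∈ Finset.range n,
            (min (max (a (j+1) - m) 0) 1 - min (max (a j - m) 0) 1) := by
          apply Finset.sum_congr rfl
          intro m hm
          have hcond : ∀ i, (a j ≤ τ i + m ∧ τ i + m < a (j+1)) ↔
              (a j - m ≤ τ i ∧ τ i < a (j+1) - m) := by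
            intro i; constructor <;> (rintro ⟨h1, h2⟩; constructor <;> linarith)
          rw [Finset.sum_congr rfl (fun i _ => by rw [if_congr (hcond i) rfl rfl])]
          exact keylem (a j - m) (a (j+1) - m) (by linarith [ham (Nat.le_succ j)])
            (halign j (by omega) m) (halign (j+1) (by omega) m)
      _ = w j := by
          rw [Finset.sum_sub_distrib,
            clampSum n (a (j+1)) (ha_nonneg _) (han _),
            clampSum n (a j) (ha_nonneg _) (han _),
            hstep]
          ring

/-- Sparse decomposition (Lemma 2.2 applied to the tail `D^*_{T₀ᶜ} h`). -/
theorem tail_sparse_decomposition {N d : ℕ}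
    (D : Matrix (Fin N) (Fin d) ℝ) (hD : D * Dᵀ = 1)
    (h : Fin N → ℝ) (s n : ℕ) (hn : 1 ≤ n) (hns : n ≤ s)
    (r : ℝ) (hr : 0 ≤ r)
    (T0 : Finset (Fin d)) (hT0card : T0.card = s)
    (hT0max : ∀ i ∈ T0, ∀ j ∈ T0ᶜ, |(Dᵀ *ᵥ h) j| ≤ |(Dᵀ *ᵥ h) i|)
    (y : Fin d → ℝ) (hy : y = fun j => if j ∈ T0 then 0 else (Dᵀ *ᵥ h) j)
    (hy1 : ∑ j, |y j| ≤ s * r)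
    (hyinf : ∀ j, |y j| ≤ (s / n) * r) :
    ∃ (K : ℕ) (lam : Fin K → ℝ) (u : Fin K → Fin d → ℝ),
      (∀ i, 0 < lam i ∧ lam i ≤ 1) ∧
      (∑ i, lam i = 1) ∧
      (∀ i, ((univ.filter fun j => u i j ≠ 0).card ≤ n) ∧
            (∀ j, u i j ≠ 0 → j ∈ T0ᶜ) ∧
            (∀ j, |u i j| ≤ (s / n) * r)) ∧
      (y = ∑ i, lam i • u i) ∧
      (∑ i, lam i * ∑ j, (u i j) ^ 2 ≤ (s : ℝ) ^ 2 * r ^ 2 / n) := by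
  classical
  have hn0 : (0:ℝ) < n := by exact_mod_cast hn
  have hs0 : (0:ℝ) < s := by
    have : 1 ≤ s := le_trans hn hns
    exact_mod_cast this
  by_cases hrz : r = 0
  · -- trivial case: y = 0
    have hy0 : y = 0 := by
      funext j
      have := hyinf j
      rw [hrz, mul_zero] at this
      exact abs_eq_zero.1 (le_antisymm this (abs_nonneg _))
    refine ⟨1, fun _ => 1, fun _ _ => 0, ?_, ?_, ?_, ?_, ?_⟩
    · intro i; exact ⟨one_pos, le_refl 1⟩
    · simp
    · intro i
      refine ⟨?_, ?_, ?_⟩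
      · simp
      · intro j hj; exact absurd rfl hj
      · intro j; simp [hrz]
    · rw [hy0]; funext j; simp
    · simp [hrz]
  · have hr0 : 0 < r := lt_of_le_of_ne hr (Ne.symm hrz)
    set c : ℝ := ((s:ℝ) / n) * r with hc
    have hc0 : 0 ≤ c := by positivity
    have hcpos : 0 < c := by positivity
    set w : ℕ → ℝ := fun k => if hk : k < d then |y ⟨k, hk⟩| / c else 0 with hw
    have hw0 : ∀ k, 0 ≤ w k := by
      intro k; simp only [hw]
      split
      · positivity
      · exact le_rfl
    have hw1 : ∀ k, w k ≤ 1 := by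
      intro k; simp only [hw]
      split
      · rw [div_le_one hcpos]; exact hyinf _
      · norm_num
    have hwd : ∀ k, d ≤ k → w k = 0 := by
      intro k hk; simp only [hw]; rw [dif_neg (by omega)]
    have hsum : ∑ k ∈ Finset.range d, w k ≤ n := by
      have e1 : ∑ k ∈ Finset.range d, w k = (∑ j : Fin d, |y j|) / c := by
        rw [Finset.sum_div, ← Fin.sum_univ_eq_sum_range (fun k => w k) d]
        apply Finset.sum_congr rfl
        intro j _
        simp only [hw]; rw [dif_pos j.2]
      rw [e1, div_le_iff₀ hcpos]
      calc (∑ j : Fin d, |y j|) ≤ s * r := hy1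
        _ = (n:ℝ) * c := by rw [hc]; field_simp
    obtain ⟨K, lam, S, hlpos, hlsum, hScard, hSsub, hrecon⟩ :=
      exists_decomp d n hn w hw0 hw1 hwd hsum
    set u : Fin K → Fin d → ℝ := fun i j =>
      if (j : ℕ) ∈ S i ∧ y j ≠ 0 then (if 0 ≤ y j then c else -c) else 0 with hu
    have huabs : ∀ i j, |u i j| ≤ c := by
      intro i j
      simp only [hu]
      split
      · split
        · rw [abs_of_pos hcpos]
        · rw [abs_neg, abs_of_pos hcpos]
      · rw [abs_zero]; exact hc0
    refine ⟨K, lam, u, ?_, hlsum, ?_, ?_, ?_⟩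
    · intro i
      refine ⟨hlpos i, ?_⟩
      rw [← hlsum]
      exact Finset.single_le_sum (fun i _ => le_of_lt (hlpos i)) (Finset.mem_univ i)
    · intro i
      refine ⟨?_, ?_, ?_⟩
      · -- sparsity
        have : (univ.filter fun j => u i j ≠ 0).card ≤ (S i).card := by
          apply Finset.card_le_card_of_injOn Fin.val
          · intro j hj
            have hj' := (Finset.mem_filter.1 hj).2
            simp only [hu] at hj'
            by_contra hns'
            exact hj' (by rw [if_neg (fun hcond => hns' hcond.1)])
          · intro j1 _ j2 _ hj
            exact Fin.ext hj
        exact le_trans this (hScard i)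
      · -- support
        intro j hj
        simp only [hu] at hj
        have hy' : y j ≠ 0 := by
          by_contra hy0
          exact hj (by rw [if_neg (fun hcond => hcond.2 hy0)])
        rw [Finset.mem_compl]
        intro hjT0
        apply hy'
        rw [hy]; simp [hjT0]
      · exact huabs i
    · -- reconstruction
      funext j
      rw [Finset.sum_apply]
      simp only [Pi.smul_apply, smul_eq_mul]
      by_cases hyj : y j = 0
      · rw [hyj, Finset.sum_eq_zero]
        intro i _
        simp only [hu]
        rw [if_neg (fun hcond => hcond.2 hyj), mul_zero]
      · have hwj : w (j : ℕ) = |y j| / c := by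
          simp only [hw]; rw [dif_pos j.2]
        have hrec := hrecon (j : ℕ) j.2
        have e : ∀ i : Fin K, lam i * u i j
            = (if 0 ≤ y j then c else -c) * (lam i * (if (j:ℕ) ∈ S i then (1:ℝ) else 0)) := by
          intro i
          simp only [hu]
          by_cases hjS : (j:ℕ) ∈ S i
          · rw [if_pos ⟨hjS, hyj⟩, if_pos hjS]
            ring
          · rw [if_neg (fun hcond => hjS hcond.1), if_neg hjS]
            ring
        rw [Finset.sum_congr rfl (fun i _ => e i), ← Finset.mul_sum, hrec, hwj]
        rcases le_or_gt 0 (y j) with hyp | hyn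
        · rw [if_pos hyp, abs_of_nonneg hyp]
          field_simp
        · rw [if_neg (not_le.2 hyn), abs_of_neg hyn]
          field_simp
    · -- energy
      have hbound : ∀ i : Fin K, ∑ j, (u i j) ^ 2 ≤ (n : ℝ) * c ^ 2 := by
        intro i
        have e1 : ∀ j : Fin d, (u i j) ^ 2 ≤ (if (j:ℕ) ∈ S i then c ^ 2 else 0) := by
          intro j
          simp only [hu]
          by_cases hjS : (j:ℕ) ∈ S i
          · rw [if_pos hjS]
            by_cases hyj : y j ≠ 0
            · rw [if_pos ⟨hjS, hyj⟩]
              split <;> simp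
            · rw [if_neg (fun hcond => hyj hcond.2)]
              simpa using sq_nonneg c
          · rw [if_neg (fun hcond => hjS hcond.1), if_neg hjS]
            norm_num
        calc ∑ j, (u i j) ^ 2 ≤ ∑ j : Fin d, (if (j:ℕ) ∈ S i then c ^ 2 else 0) :=
              Finset.sum_le_sum (fun j _ => e1 j)
          _ = (univ.filter fun j : Fin d => (j:ℕ) ∈ S i).card * c ^ 2 := by
              rw [Finset.sum_ite, Finset.sum_const, Finset.sum_const_zero, add_zero,
                nsmul_eq_mul]
          _ ≤ (n : ℝ) * c ^ 2 := by
              apply mul_le_mul_of_nonneg_right _ (by positivity)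
              have hcard : (univ.filter fun j : Fin d => (j:ℕ) ∈ S i).card ≤ (S i).card := by
                apply Finset.card_le_card_of_injOn Fin.val
                · intro j hj; exact (Finset.mem_filter.1 hj).2
                · intro j1 _ j2 _ hj; exact Fin.ext hj
              have : (univ.filter fun j : Fin d => (j:ℕ) ∈ S i).card ≤ n :=
                le_trans hcard (hScard i)
              exact_mod_cast this
      calc ∑ i, lam i * ∑ j, (u i j) ^ 2 ≤ ∑ i, lam i * ((n : ℝ) * c ^ 2) := by
            apply Finset.sum_le_sum
            intro i _
            exact mul_le_mul_of_nonneg_left (hbound i) (le_of_lt (hlpos i))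
        _ = (n : ℝ) * c ^ 2 := by rw [← Finset.sum_mul, hlsum, one_mul]
        _ = (s : ℝ) ^ 2 * r ^ 2 / n := by rw [hc]; field_simp
end
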